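/- arXiv:2312.05587 — 2 statements merged into one kernel-verified Lean document; each statement's English description precedes it below -/
import Mathlib

section
/- Let g ∈ ℤ_p[[t]] and let ζ be a primitive p^n-th root of unity in \bar{ℚ}_p (n ≥ 1). Then the series g(ζ - 1) converges in ℚ_p(ζ), and the product ∏_{ζ^{p^n}=1} g(ζ-1) (over all p^n-th roots of unity, including ζ = 1) lies in ℤ_p. -/
open Polynomial Filter

/-- The canonical ring hom `ℤ_[p] →+* K`. -/
noncomputable def zmap (p : ℕ) [Fact p.Prime] (K : Type*) [NormedField K]
    [Algebra ℚ_[p] K] : ℤ_[p] →+* K :=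
  (algebraMap ℚ_[p] K).comp (PadicInt.Coe.ringHom)

section aux

variable {p : ℕ} [Fact p.Prime] {K : Type*} [NormedField K]
  [Algebra ℚ_[p] K]

theorem norm_zmap (hiso : ∀ x : ℚ_[p], ‖algebraMap ℚ_[p] K x‖ = ‖x‖) (z : ℤ_[p]) :
    ‖zmap p K z‖ = ‖z‖ := by
  show ‖algebraMap ℚ_[p] K (z : ℚ_[p])‖ = ‖z‖
  rw [hiso]
  rfl

theorem norm_natCast_le_one (hiso : ∀ x : ℚ_[p], ‖algebraMap ℚ_[p] K x‖ = ‖x‖) (c : ℕ) :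
    ‖(c : K)‖ ≤ 1 := by
  have h1 : ((c : ℚ_[p]) : ℚ_[p]) = algebraMap ℚ_[p] ℚ_[p] (c : ℚ_[p]) := rfl
  have : (c : K) = algebraMap ℚ_[p] K (c : ℚ_[p]) := by
    rw [map_natCast]
  rw [this, hiso]
  have := Padic.norm_int_le_one (p := p) (c : ℤ)
  simpa using this

variable [IsUltrametricDist K]

/-- Any `p^m`-th root of unity `ξ` in `K` satisfies `‖ξ - 1‖ < 1`. -/
theorem norm_sub_one_lt (hiso : ∀ x : ℚ_[p], ‖algebraMap ℚ_[p] K x‖ = ‖x‖) :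
    ∀ (m : ℕ) (ξ : K), ξ ^ p ^ m = 1 → ‖ξ - 1‖ < 1 := by
  have hp : p.Prime := Fact.out
  intro m
  induction m with
  | zero =>
    intro ξ hξ
    rw [pow_zero, pow_one] at hξ
    simp [hξ]
  | succ m ih =>
    intro ξ hξ
    have hNpos : p ^ (m + 1) ≠ 0 := pow_ne_zero _ hp.pos.ne'
    have hξnorm : ‖ξ‖ ≤ 1 := by
      by_contra h
      push_neg at h
      have h2 : 1 < ‖ξ‖ ^ p ^ (m + 1) := one_lt_pow₀ h hNpos
      rw [← norm_pow, hξ, norm_one] at h2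
      exact lt_irrefl _ h2
    have hsub_le : ‖ξ - 1‖ ≤ 1 := by
      have := IsUltrametricDist.norm_add_le_max ξ (-1 : K)
      simp only [← sub_eq_add_neg, norm_neg, norm_one] at this
      exact this.trans (max_le hξnorm le_rfl)
    -- ξ^p is a p^m-th root of unity
    have hη : (ξ ^ p) ^ p ^ m = 1 := by
      rw [← pow_mul, mul_comm, ← pow_succ, hξ]
    have hIH : ‖ξ ^ p - 1‖ < 1 := ih (ξ ^ p) hη
    -- binomial expansion
    have hbin : ξ ^ p = ∑ i ∈ Finset.range (p + 1), (ξ - 1) ^ i * (p.choose i : K) := by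
      have := add_pow (ξ - 1) (1 : K) p
      simpa using this
    have hsplit : ξ ^ p = 1 + (∑ i ∈ Finset.Ico 1 p, (ξ - 1) ^ i * (p.choose i : K))
        + (ξ - 1) ^ p := by
      rw [hbin, Finset.sum_range_succ, Finset.range_eq_Ico,
        Finset.sum_eq_sum_Ico_succ_bot hp.pos]
      simp [Nat.choose_self]
    set S : K := ∑ i ∈ Finset.Ico 1 p, (ξ - 1) ^ i * (p.choose i : K) with hS
    have hkey : (ξ - 1) ^ p = (ξ ^ p - 1) - S := by
      rw [hsplit]; ring
    have hSnorm : ‖S‖ ≤ (p : ℝ)⁻¹ := by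
      refine IsUltrametricDist.norm_sum_le_of_forall_le_of_nonneg (by positivity) ?_
      intro i hi
      rw [Finset.mem_Ico] at hi
      obtain ⟨c, hc⟩ := hp.dvd_choose_self (Nat.one_le_iff_ne_zero.mp hi.1) hi.2
      rw [norm_mul, hc]
      have h1 : ‖(ξ - 1) ^ i‖ ≤ 1 := by
        rw [norm_pow]; exact pow_le_one₀ (norm_nonneg _) hsub_le
      have h2 : ‖((p * c : ℕ) : K)‖ ≤ (p : ℝ)⁻¹ := by
        push_cast
        rw [norm_mul]
        have hpK : ‖(p : K)‖ = (p : ℝ)⁻¹ := by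
          have : ((p : ℕ) : K) = algebraMap ℚ_[p] K ((p : ℕ) : ℚ_[p]) := by
            rw [map_natCast]
          rw [this, hiso, Padic.norm_p]
        rw [hpK]
        calc (p : ℝ)⁻¹ * ‖(c : K)‖ ≤ (p : ℝ)⁻¹ * 1 := by
              have := norm_natCast_le_one hiso c
              have hpinv : (0 : ℝ) ≤ (p : ℝ)⁻¹ := by positivity
              exact mul_le_mul_of_nonneg_left this hpinv
          _ = (p : ℝ)⁻¹ := mul_one _
      calc ‖(ξ - 1) ^ i‖ * ‖((p * c : ℕ) : K)‖ ≤ 1 * (p : ℝ)⁻¹ :=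
            mul_le_mul h1 h2 (norm_nonneg _) zero_le_one
        _ = (p : ℝ)⁻¹ := one_mul _
    have hppow : ‖(ξ - 1) ^ p‖ < 1 := by
      rw [hkey, sub_eq_add_neg]
      refine lt_of_le_of_lt (IsUltrametricDist.norm_add_le_max _ _) ?_
      rw [norm_neg]
      refine max_lt hIH (lt_of_le_of_lt hSnorm ?_)
      rw [inv_lt_one_iff₀]
      right
      exact_mod_cast hp.one_lt
    by_contra h
    push_neg at h
    have : (1 : ℝ) ≤ ‖(ξ - 1) ^ p‖ := by
      rw [norm_pow]
      exact one_le_pow₀ h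
    linarith

theorem summable_aux [CompleteSpace K]
    (hiso : ∀ x : ℚ_[p], ‖algebraMap ℚ_[p] K x‖ = ‖x‖)
    (g : PowerSeries ℤ_[p]) {x : K} (hx : ‖x‖ < 1) :
    Summable (fun i : ℕ =>
      algebraMap ℚ_[p] K ((PowerSeries.coeff i g : ℤ_[p]) : ℚ_[p]) * x ^ i) := by
  refine Summable.of_norm_bounded (g := fun i => ‖x‖ ^ i)
    (summable_geometric_of_lt_one (norm_nonneg x) hx) (fun i => ?_)
  rw [norm_mul, norm_pow]
  have h1 : ‖algebraMap ℚ_[p] K ((PowerSeries.coeff i g : ℤ_[p]) : ℚ_[p])‖ ≤ 1 := by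
    rw [hiso]
    exact PadicInt.norm_le_one _
  exact mul_le_of_le_one_left (pow_nonneg (norm_nonneg x) i) h1

/-- For any polynomial `G` over `ℤ_[p]`, the product of the values of `G` (mapped to `K`)
over all `N`-th roots of unity lies in the image of `ℤ_[p]`. -/
theorem prod_eval_mem {N : ℕ} (hN : 0 < N) {ζ : K} (hζ : IsPrimitiveRoot ζ N)
    (G : Polynomial ℤ_[p]) :
    ∃ c : ℤ_[p], ∏ j ∈ Finset.range N,
      Polynomial.eval (ζ ^ j) (G.map (zmap p K)) = zmap p K c := by
  haveI : NeZero N := ⟨hN.ne'⟩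
  classical
  set ψ := zmap p K with hψ
  have hζN : ζ ^ N = 1 := hζ.pow_eq_one
  -- the character
  set χ : ZMod N → K := fun s => ζ ^ s.val with hχ
  have hχ_cast : ∀ a : ℕ, χ ((a : ZMod N)) = ζ ^ a := by
    intro a
    have h1 : ζ ^ a = ζ ^ (N * (a / N) + a % N) := by rw [Nat.div_add_mod]
    rw [h1, pow_add, pow_mul, hζN, one_pow, one_mul]
    simp [hχ, ZMod.val_natCast]
  have hχ_add : ∀ s t : ZMod N, χ (s + t) = χ s * χ t := by
    intro s t
    conv_lhs => rw [← ZMod.natCast_rightInverse s, ← ZMod.natCast_rightInverse t,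
      ← Nat.cast_add, hχ_cast, pow_add]
  have hχ_npow : ∀ (a : ℕ) (s : ZMod N), χ ((a : ZMod N) * s) = χ s ^ a := by
    intro a s
    conv_lhs => rw [← ZMod.natCast_rightInverse s, ← Nat.cast_mul, hχ_cast, pow_mul']
  -- the circulant vector
  set b : ZMod N → ℤ_[p] := fun r =>
    ∑ i ∈ Finset.range (G.natDegree + 1), if ((i : ZMod N) = r) then G.coeff i else 0 with hb
  refine ⟨(Matrix.circulant b).det, ?_⟩
  set b' : ZMod N → K := fun r => ψ (b r) with hb'
  have hmapdet : ψ (Matrix.circulant b).det = (Matrix.circulant b').det := by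
    rw [RingHom.map_det, RingHom.mapMatrix_apply, Matrix.map_circulant]
  -- eigenvalues
  set lam : ZMod N → K := fun k => Polynomial.eval (χ (-k)) (G.map ψ) with hlam
  -- the DFT matrix
  set V : Matrix (ZMod N) (ZMod N) K := Matrix.of fun i k => χ (i * k) with hV
  -- eigenvalue identity: for every k, ∑ r, b' r * χ (-(r*k)) = lam k
  have hsum_eq : ∀ k : ZMod N, (∑ r : ZMod N, b' r * χ (-(r * k))) = lam k := by
    intro k
    have h1 : ∀ r : ZMod N, b' r =
        ∑ i ∈ Finset.range (G.natDegree + 1),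
          if ((i : ZMod N) = r) then ψ (G.coeff i) else 0 := by
      intro r
      rw [hb', hb]
      simp only [map_sum]
      refine Finset.sum_congr rfl (fun i _ => ?_)
      split <;> simp
    calc (∑ r : ZMod N, b' r * χ (-(r * k)))
        = ∑ r : ZMod N, ∑ i ∈ Finset.range (G.natDegree + 1),
            (if ((i : ZMod N) = r) then ψ (G.coeff i) * χ (-(r * k)) else 0) := by
          refine Finset.sum_congr rfl (fun r _ => ?_)
          rw [h1 r, Finset.sum_mul]
          refine Finset.sum_congr rfl (fun i _ => ?_)
          split <;> simp
      _ = ∑ i ∈ Finset.range (G.natDegree + 1), ∑ r : ZMod N,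
            (if ((i : ZMod N) = r) then ψ (G.coeff i) * χ (-(r * k)) else 0) :=
          Finset.sum_comm
      _ = ∑ i ∈ Finset.range (G.natDegree + 1),
            ψ (G.coeff i) * χ (-((i : ZMod N) * k)) := by
          refine Finset.sum_congr rfl (fun i _ => ?_)
          rw [Finset.sum_ite_eq]
          simp
      _ = ∑ i ∈ Finset.range (G.natDegree + 1),
            (G.map ψ).coeff i * (χ (-k)) ^ i := by
          refine Finset.sum_congr rfl (fun i _ => ?_)
          rw [Polynomial.coeff_map]
          congr 1
          rw [← hχ_npow i (-k)]
          congr 1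
          ring
      _ = lam k := (Polynomial.eval_eq_sum_range'
            (lt_of_le_of_lt Polynomial.natDegree_map_le (Nat.lt_succ_of_le le_rfl)) _).symm
  -- the matrix identity
  have hmat : Matrix.circulant b' * V = V * Matrix.diagonal lam := by
    ext i k
    rw [Matrix.mul_apply, Matrix.mul_diagonal]
    have h2 : ∀ j : ZMod N, Matrix.circulant b' i j * V j k = b' (i - j) * χ (j * k) := by
      intro j; rw [Matrix.circulant_apply]; rfl
    calc (∑ j : ZMod N, Matrix.circulant b' i j * V j k)
        = ∑ j : ZMod N, b' (i - j) * χ (j * k) := by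
          exact Finset.sum_congr rfl (fun j _ => h2 j)
      _ = ∑ r : ZMod N, b' r * χ ((i - r) * k) := by
          refine Fintype.sum_equiv (Equiv.subLeft i) _ _ (fun r => ?_)
          simp [Equiv.subLeft, sub_sub_cancel]
      _ = ∑ r : ZMod N, χ (i * k) * (b' r * χ (-(r * k))) := by
          refine Finset.sum_congr rfl (fun r _ => ?_)
          have : (i - r) * k = i * k + -(r * k) := by ring
          rw [this, hχ_add]
          ring
      _ = χ (i * k) * lam k := by rw [← Finset.mul_sum, hsum_eq k]
      _ = V i k * lam k := rfl
  -- V is essentially a Vandermonde matrix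
  let e : Fin N ≃ ZMod N :=
    { toFun := fun i => ((i : ℕ) : ZMod N)
      invFun := fun s => ⟨s.val, s.val_lt⟩
      left_inv := fun i => by
        ext
        simp [ZMod.val_natCast, Nat.mod_eq_of_lt i.isLt]
      right_inv := fun s => ZMod.natCast_rightInverse s }
  have hVrep : V = (Matrix.reindex e e) (Matrix.transpose (Matrix.vandermonde fun k : Fin N => ζ ^ (k : ℕ))) := by
    ext i k
    rw [Matrix.reindex_apply, Matrix.submatrix_apply, Matrix.transpose_apply,
      Matrix.vandermonde]
    show χ (i * k) = (ζ ^ ((e.symm k : Fin N) : ℕ)) ^ ((e.symm i : Fin N) : ℕ)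
    have hi : ((e.symm i : Fin N) : ℕ) = i.val := rfl
    have hk : ((e.symm k : Fin N) : ℕ) = k.val := rfl
    rw [hi, hk]
    conv_lhs => rw [← ZMod.natCast_rightInverse i, ← ZMod.natCast_rightInverse k,
      ← Nat.cast_mul, hχ_cast, pow_mul']
  have hdetV : V.det ≠ 0 := by
    rw [hVrep, Matrix.det_reindex_self, Matrix.det_transpose, Matrix.det_vandermonde]
    rw [Finset.prod_ne_zero_iff]
    intro i _
    rw [Finset.prod_ne_zero_iff]
    intro j hj
    rw [Finset.mem_Ioi] at hj
    rw [sub_ne_zero]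
    intro heq
    have := hζ.pow_inj j.isLt i.isLt heq
    exact absurd (Fin.val_injective this) (ne_of_gt hj)
  -- take determinants
  have hdet : ψ (Matrix.circulant b).det * V.det = V.det * ∏ k : ZMod N, lam k := by
    rw [hmapdet, ← Matrix.det_mul, hmat, Matrix.det_mul, Matrix.det_diagonal]
  have hfinal : ψ (Matrix.circulant b).det = ∏ k : ZMod N, lam k := by
    have h3 : V.det * ψ (Matrix.circulant b).det = V.det * ∏ k : ZMod N, lam k := by
      rw [mul_comm (V.det)]; exact hdet
    exact mul_left_cancel₀ hdetV h3
  -- finally identify the product of eigenvalues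
  have h4 : ∏ k : ZMod N, lam k = ∏ k : ZMod N, Polynomial.eval (χ k) (G.map ψ) := by
    refine Fintype.prod_equiv (Equiv.neg (ZMod N)) _ _ (fun k => ?_)
    rfl
  have h5 : ∏ k : ZMod N, Polynomial.eval (χ k) (G.map ψ)
      = ∏ j ∈ Finset.range N, Polynomial.eval (ζ ^ j) (G.map ψ) := by
    rw [← Fin.prod_univ_eq_prod_range (fun j => Polynomial.eval (ζ ^ j) (G.map ψ)) N]
    refine (Fintype.prod_equiv e _ _ (fun i => ?_)).symm
    congr 1
    exact (hχ_cast (i : ℕ)).symm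
  rw [hfinal, h4, h5]

end aux

/-- Evaluation of `g ∈ ℤ_p[[t]]` at `x` in a `ℚ_p`-algebra, as the sum of the series. -/
noncomputable def psEval (p : ℕ) [Fact p.Prime] (K : Type*) [NormedField K]
    [Algebra ℚ_[p] K] (g : PowerSeries ℤ_[p]) (x : K) : K :=
  ∑' i : ℕ, algebraMap ℚ_[p] K ((PowerSeries.coeff i g : ℤ_[p]) : ℚ_[p]) * x ^ i

/-- For `g ∈ ℤ_p[[t]]` and `ζ` a primitive `p^n`-th root of unity (`n ≥ 1`) in a
complete ultrametric isometric extension `K` of `ℚ_p`, the series `g(ζ - 1)`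
converges, and the product `∏_{ζ^{p^n}=1} g(ζ-1)` over all `p^n`-th roots of unity
lies in `ℤ_p`. -/
theorem stmt15 (p : ℕ) [Fact p.Prime] (n : ℕ) (hn : 1 ≤ n)
    (K : Type*) [NormedField K] [CompleteSpace K] [IsUltrametricDist K]
    [Algebra ℚ_[p] K] (hiso : ∀ x : ℚ_[p], ‖algebraMap ℚ_[p] K x‖ = ‖x‖)
    (g : PowerSeries ℤ_[p]) (ζ : K) (hζ : IsPrimitiveRoot ζ (p ^ n)) :
    Summable (fun i : ℕ =>
      algebraMap ℚ_[p] K ((PowerSeries.coeff i g : ℤ_[p]) : ℚ_[p]) * (ζ - 1) ^ i) ∧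
    ∃ c : ℤ_[p],
      ((Polynomial.nthRoots (p ^ n) (1 : K)).map (fun ξ => psEval p K g (ξ - 1))).prod
        = algebraMap ℚ_[p] K (c : ℚ_[p]) := by
  have hp : p.Prime := Fact.out
  set N := p ^ n with hNdef
  have hNpos : 0 < N := pow_pos hp.pos n
  have hξnorm : ∀ j : ℕ, ‖ζ ^ j - 1‖ < 1 := by
    intro j
    refine norm_sub_one_lt hiso n (ζ ^ j) ?_
    rw [← pow_mul, mul_comm, pow_mul, hζ.pow_eq_one, one_pow]
  constructor
  · have := hξnorm 1
    rw [pow_one] at this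
    exact summable_aux hiso g this
  · -- the product over all roots of unity
    have hroots : Polynomial.nthRoots N (1 : K)
        = (Multiset.range N).map (fun j => ζ ^ j) := by
      rw [hζ.nthRoots_eq (one_pow N)]
      exact Multiset.map_congr rfl (fun j _ => mul_one _)
    have hprod : ((Polynomial.nthRoots N (1 : K)).map (fun ξ => psEval p K g (ξ - 1))).prod
        = ∏ j ∈ Finset.range N, psEval p K g (ζ ^ j - 1) := by
      rw [hroots, Multiset.map_map, Finset.prod_eq_multiset_prod, Finset.range_val]
      rfl
    rw [hprod]
    -- approximating sequence
    set F : ℕ → K := fun m => ∏ j ∈ Finset.range N, Polynomial.eval (ζ ^ j)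
      (((PowerSeries.trunc (m + 1) g).comp (Polynomial.X - Polynomial.C 1)).map (zmap p K))
      with hF
    -- each F m is in the range of zmap
    have hFmem : ∀ m : ℕ, F m ∈ Set.range (zmap p K) := by
      intro m
      obtain ⟨c, hc⟩ := prod_eval_mem hNpos hζ
        ((PowerSeries.trunc (m + 1) g).comp (Polynomial.X - Polynomial.C 1))
      exact ⟨c, hc.symm⟩
    -- F m is the partial-sum product
    have hFeq : ∀ m : ℕ, F m = ∏ j ∈ Finset.range N,
        ∑ i ∈ Finset.range (m + 1),
          algebraMap ℚ_[p] K ((PowerSeries.coeff i g : ℤ_[p]) : ℚ_[p])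
            * (ζ ^ j - 1) ^ i := by
      intro m
      rw [hF]
      refine Finset.prod_congr rfl (fun j _ => ?_)
      rw [Polynomial.map_comp, Polynomial.eval_comp]
      have h1 : Polynomial.eval (ζ ^ j)
          (Polynomial.map (zmap p K) (Polynomial.X - Polynomial.C 1)) = ζ ^ j - 1 := by
        simp
      rw [h1]
      have h2 : ((PowerSeries.trunc (m + 1) g).map (zmap p K)).natDegree < m + 1 :=
        lt_of_le_of_lt Polynomial.natDegree_map_le (PowerSeries.natDegree_trunc_lt g m)
      rw [Polynomial.eval_eq_sum_range' h2]
      refine Finset.sum_congr rfl (fun i hi => ?_)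
      rw [Finset.mem_range] at hi
      rw [Polynomial.coeff_map, PowerSeries.coeff_trunc, if_pos hi]
      rfl
    -- convergence of F to the product of psEval values
    have htend : Filter.Tendsto F Filter.atTop
        (nhds (∏ j ∈ Finset.range N, psEval p K g (ζ ^ j - 1))) := by
      have h0 : ∀ j ∈ Finset.range N, Filter.Tendsto
          (fun m : ℕ => ∑ i ∈ Finset.range (m + 1),
            algebraMap ℚ_[p] K ((PowerSeries.coeff i g : ℤ_[p]) : ℚ_[p])
              * (ζ ^ j - 1) ^ i)
          Filter.atTop (nhds (psEval p K g (ζ ^ j - 1))) := by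
        intro j _
        have hsum := summable_aux hiso g (hξnorm j)
        have h1 := hsum.hasSum.tendsto_sum_nat
        have h2 : Filter.Tendsto (fun m : ℕ => m + 1) Filter.atTop Filter.atTop :=
          Filter.tendsto_add_atTop_nat 1
        exact h1.comp h2
      have := tendsto_finset_prod (Finset.range N) h0
      refine Filter.Tendsto.congr (fun m => (hFeq m).symm) this
    -- the range of zmap is closed
    have hisoZ : Isometry (zmap p K : ℤ_[p] → K) := by
      refine Isometry.of_dist_eq (fun a b => ?_)
      rw [dist_eq_norm, dist_eq_norm, ← map_sub, norm_zmap hiso]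
    have hclosed : IsClosed (Set.range (zmap p K : ℤ_[p] → K)) :=
      hisoZ.isClosedEmbedding.isClosed_range
    have hmem : (∏ j ∈ Finset.range N, psEval p K g (ζ ^ j - 1))
        ∈ Set.range (zmap p K : ℤ_[p] → K) :=
      hclosed.mem_of_tendsto htend (Filter.Eventually.of_forall hFmem)
    obtain ⟨c, hc⟩ := hmem
    exact ⟨c, hc.symm⟩
end

section
/- Let M be a finitely generated torsion module over Λ = ℤ_p[[t]] and f ∈ Λ. If M/fM is finite and M[f] (the f-torsion submodule) is finite, then |M/fM| / |M[f]| depends only on the pseudo-isomorphism class of M; in particular, if M is pseudo-isomorphic to M', M/fM and M'/fM' are finite, and M[f], M'[f] are finite, then |M/fM|/|M[f]| = |M'/fM'|/|M'[f]|. -/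
open LinearMap Submodule Function

section Herbrand

variable {R : Type*} [CommRing R]

private lemma card_eq_ker_mul_range' {X Y : Type*} [AddCommGroup X] [Module R X]
    [AddCommGroup Y] [Module R Y] (g : X →ₗ[R] Y) :
    Nat.card X = Nat.card (ker g) * Nat.card (range g) := by
  rw [Submodule.card_eq_card_quotient_mul_card (ker g)]
  exact congrArg _ (Nat.card_congr g.quotKerEquivRange.toEquiv)

/-- Six-term `Nat.card` identity for a short exact sequence with the
multiplication-by-`f` endomorphisms. -/
private lemma herbrand_ses {A B C : Type*}
    [AddCommGroup A] [Module R A] [AddCommGroup B] [Module R B]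
    [AddCommGroup C] [Module R C]
    (i : A →ₗ[R] B) (π : B →ₗ[R] C) (hi : Function.Injective i)
    (hπ : Function.Surjective π) (hex : range i = ker π) (f : R) :
    Nat.card (ker (lsmul R A f)) * Nat.card (ker (lsmul R C f))
        * Nat.card (B ⧸ range (lsmul R B f))
      = Nat.card (ker (lsmul R B f)) * Nat.card (A ⧸ range (lsmul R A f))
        * Nat.card (C ⧸ range (lsmul R C f)) := by
  classical
  set a : A →ₗ[R] A := lsmul R A f with ha
  set b : B →ₗ[R] B := lsmul R B f with hb
  set c : C →ₗ[R] C := lsmul R C f with hc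
  have hab : ∀ x : A, b (i x) = i (a x) := fun x => by
    simp [ha, hb, lsmul_apply, map_smul]
  have hbc : ∀ x : B, c (π x) = π (b x) := fun x => by
    simp [hb, hc, lsmul_apply, map_smul]
  -- the maps of the six-term sequence
  have hd1 : ∀ x ∈ ker a, i x ∈ ker b := by
    intro x hx
    rw [mem_ker] at hx ⊢
    rw [hab, hx, map_zero]
  set d1 : ker a →ₗ[R] ker b := i.restrict hd1 with hd1def
  have hd2 : ∀ x ∈ ker b, π x ∈ ker c := by
    intro x hx
    rw [mem_ker] at hx ⊢
    rw [hbc, hx, map_zero]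
  set d2 : ker b →ₗ[R] ker c := π.restrict hd2 with hd2def
  have hd4le : range a ≤ comap i (range b) := by
    rintro x ⟨y, rfl⟩
    exact ⟨i y, hab y⟩
  set d4 : (A ⧸ range a) →ₗ[R] B ⧸ range b := (range a).mapQ (range b) i hd4le with hd4def
  have hd5le : range b ≤ comap π (range c) := by
    rintro x ⟨y, rfl⟩
    exact ⟨π y, hbc y⟩
  set d5 : (B ⧸ range b) →ₗ[R] C ⧸ range c := (range b).mapQ (range c) π hd5le with hd5def
  -- the connecting map δ : ker c → A ⧸ range a
  set e : A ≃ₗ[R] range i := LinearEquiv.ofInjective i hi with he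
  have hesymm : ∀ (z : A) (hz : i z ∈ range i), e.symm ⟨i z, hz⟩ = z := by
    intro z hz
    apply e.injective
    rw [e.apply_symm_apply]
    exact Subtype.ext (LinearEquiv.ofInjective_apply i z).symm
  set sec : C → B := surjInv hπ with hsecdef
  have hsec : ∀ w : C, π (sec w) = w := fun w => surjInv_eq hπ w
  have hmem : ∀ x : B, π x ∈ ker c → b x ∈ range i := by
    intro x hx
    rw [hex, mem_ker, ← hbc]
    rw [mem_ker] at hx
    exact hx
  have hmemsec : ∀ w : ker c, b (sec (w : C)) ∈ range i := by
    intro w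
    apply hmem
    rw [hsec]
    exact w.2
  set δ0 : ker c → A ⧸ range a :=
    fun w => Submodule.Quotient.mk (e.symm ⟨b (sec (w : C)), hmemsec w⟩) with hδ0
  have hchar : ∀ (w : ker c) (u : B) (hu : u ∈ range i),
      (∃ x : B, π x = (w : C) ∧ b x = u) →
      δ0 w = Submodule.Quotient.mk (e.symm ⟨u, hu⟩) := by
    rintro w u hu ⟨x, hx, hbx⟩
    have hdiff : sec (w : C) - x ∈ range i := by
      rw [hex, mem_ker, map_sub, hsec, hx, sub_self]
    obtain ⟨z, hz⟩ := hdiff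
    show Submodule.Quotient.mk (e.symm ⟨b (sec (w : C)), hmemsec w⟩)
      = Submodule.Quotient.mk (e.symm ⟨u, hu⟩)
    rw [Submodule.Quotient.eq]
    refine ⟨z, ?_⟩
    rw [← map_sub]
    have hval : ((⟨b (sec (w : C)), hmemsec w⟩ : range i) - ⟨u, hu⟩)
        = ⟨i (a z), ⟨a z, rfl⟩⟩ := by
      apply Subtype.ext
      show b (sec (w : C)) - u = i (a z)
      rw [← hbx, ← map_sub, ← hz, hab]
    rw [hval]
    exact (hesymm (a z) _).symm
  have hδ0add : ∀ w w' : ker c, δ0 (w + w') = δ0 w + δ0 w' := by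
    intro w w'
    rw [hchar (w + w') (b (sec (w : C)) + b (sec (w' : C)))
      (add_mem (hmemsec w) (hmemsec w'))
      ⟨sec (w : C) + sec (w' : C), by rw [map_add, hsec, hsec]; rfl, by rw [map_add]⟩]
    show Submodule.Quotient.mk
        (e.symm ⟨b (sec (w : C)) + b (sec (w' : C)), add_mem (hmemsec w) (hmemsec w')⟩)
      = δ0 w + δ0 w'
    have h1 : (⟨b (sec (w : C)) + b (sec (w' : C)),
          add_mem (hmemsec w) (hmemsec w')⟩ : range i)
        = ⟨b (sec (w : C)), hmemsec w⟩ + ⟨b (sec (w' : C)), hmemsec w'⟩ := Subtype.ext rfl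
    rw [h1, map_add, Submodule.Quotient.mk_add]
  have hδ0smul : ∀ (r : R) (w : ker c), δ0 (r • w) = r • δ0 w := by
    intro r w
    rw [hchar (r • w) (r • b (sec (w : C)))
      (Submodule.smul_mem _ r (hmemsec w))
      ⟨r • sec (w : C), by rw [map_smul, hsec]; rfl, by rw [map_smul]⟩]
    show Submodule.Quotient.mk
        (e.symm ⟨r • b (sec (w : C)), Submodule.smul_mem _ r (hmemsec w)⟩)
      = r • δ0 w
    have h1 : (⟨r • b (sec (w : C)), Submodule.smul_mem _ r (hmemsec w)⟩ : range i)
        = r • ⟨b (sec (w : C)), hmemsec w⟩ := Subtype.ext rfl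
    rw [h1, map_smul, Submodule.Quotient.mk_smul]
  set δ : ker c →ₗ[R] A ⧸ range a :=
    { toFun := δ0, map_add' := hδ0add, map_smul' := hδ0smul } with hδdef
  -- exactness
  have hd1inj : Function.Injective d1 := by
    intro x y hxy
    apply Subtype.ext
    apply hi
    exact congrArg Subtype.val hxy
  have E1 : ker d2 = range d1 := by
    ext x
    constructor
    · intro hx
      rw [mem_ker] at hx
      have hx' : π (x : B) = 0 := congrArg Subtype.val hx
      have : (x : B) ∈ range i := by rw [hex, mem_ker]; exact hx'
      obtain ⟨z, hz⟩ := this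
      have hz2 : z ∈ ker a := by
        rw [mem_ker]
        apply hi
        rw [← hab, hz, map_zero]
        exact (mem_ker.mp x.2)
      exact ⟨⟨z, hz2⟩, Subtype.ext hz⟩
    · rintro ⟨z, rfl⟩
      rw [mem_ker]
      apply Subtype.ext
      show π (d1 z : B) = 0
      have h1 : (d1 z : B) = i (z : A) := rfl
      rw [h1]
      have h2 : i (z : A) ∈ ker π := by rw [← hex]; exact ⟨z, rfl⟩
      exact mem_ker.mp h2
  have E2 : ker δ = range d2 := by
    ext w
    constructor
    · intro hw
      rw [mem_ker] at hw
      have hw' : Submodule.Quotient.mk (e.symm ⟨b (sec (w : C)), hmemsec w⟩)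
          = (0 : A ⧸ range a) := hw
      rw [Submodule.Quotient.mk_eq_zero] at hw'
      obtain ⟨z, hz⟩ := hw'
      have hbz : b (sec (w : C)) = i (a z) := by
        have h3 := congrArg (fun t => ((e t : range i) : B)) hz
        have h4 : ((e (a z) : range i) : B) = i (a z) := LinearEquiv.ofInjective_apply i (a z)
        rw [← h4]
        simpa using h3.symm
      have hker : sec (w : C) - i z ∈ ker b := by
        rw [mem_ker, map_sub, hbz, hab, sub_self]
      refine ⟨⟨sec (w : C) - i z, hker⟩, ?_⟩
      apply Subtype.ext
      show π (sec (w : C) - i z) = (w : C)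
      rw [map_sub, hsec]
      have h4 : i z ∈ ker π := by rw [← hex]; exact ⟨z, rfl⟩
      rw [mem_ker.mp h4, sub_zero]
    · rintro ⟨x, rfl⟩
      rw [mem_ker]
      show δ0 (d2 x) = 0
      rw [hchar (d2 x) 0 (zero_mem _) ⟨(x : B), rfl, mem_ker.mp x.2⟩]
      have h5 : ((⟨0, zero_mem _⟩ : range i)) = 0 := rfl
      rw [h5, map_zero, Submodule.Quotient.mk_eq_zero]
      exact zero_mem _
  have E3 : ker d4 = range δ := by
    ext q
    constructor
    · intro hq
      obtain ⟨y, rfl⟩ := Submodule.Quotient.mk_surjective (range a) q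
      rw [mem_ker, hd4def, Submodule.mapQ_apply, Submodule.Quotient.mk_eq_zero] at hq
      obtain ⟨x, hx⟩ := hq
      have hπx : π x ∈ ker c := by
        rw [mem_ker, hbc, hx]
        have h6 : i y ∈ ker π := by rw [← hex]; exact ⟨y, rfl⟩
        exact mem_ker.mp h6
      refine ⟨⟨π x, hπx⟩, ?_⟩
      show δ0 ⟨π x, hπx⟩ = Submodule.Quotient.mk y
      rw [hchar ⟨π x, hπx⟩ (i y) ⟨y, rfl⟩ ⟨x, rfl, hx⟩]
      exact congrArg Submodule.Quotient.mk (hesymm y _)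
    · rintro ⟨w, rfl⟩
      rw [mem_ker]
      show d4 (Submodule.Quotient.mk (e.symm ⟨b (sec (w : C)), hmemsec w⟩)) = 0
      rw [hd4def, Submodule.mapQ_apply, Submodule.Quotient.mk_eq_zero]
      have h7 : i (e.symm ⟨b (sec (w : C)), hmemsec w⟩) = b (sec (w : C)) := by
        exact congrArg Subtype.val (e.apply_symm_apply ⟨b (sec (w : C)), hmemsec w⟩)
      rw [h7]
      exact ⟨sec (w : C), rfl⟩
  have E4 : ker d5 = range d4 := by
    ext q
    constructor
    · intro hq
      obtain ⟨x, rfl⟩ := Submodule.Quotient.mk_surjective (range b) q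
      rw [mem_ker, hd5def, Submodule.mapQ_apply, Submodule.Quotient.mk_eq_zero] at hq
      obtain ⟨w, hw⟩ := hq
      obtain ⟨z, hz⟩ := hπ w
      have h8 : x - b z ∈ range i := by
        rw [hex, mem_ker, map_sub, ← hbc, hz, hw, sub_self]
      obtain ⟨y, hy⟩ := h8
      refine ⟨Submodule.Quotient.mk y, ?_⟩
      rw [hd4def, Submodule.mapQ_apply, hy, Submodule.Quotient.eq]
      refine ⟨-z, ?_⟩
      rw [map_neg]
      abel
    · rintro ⟨q', rfl⟩
      obtain ⟨y, rfl⟩ := Submodule.Quotient.mk_surjective (range a) q'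
      rw [mem_ker, hd5def, hd4def, Submodule.mapQ_apply, Submodule.mapQ_apply,
        Submodule.Quotient.mk_eq_zero]
      have h9 : i y ∈ ker π := by rw [← hex]; exact ⟨y, rfl⟩
      rw [mem_ker.mp h9]
      exact zero_mem _
  have E5 : Function.Surjective d5 := by
    intro q
    obtain ⟨w, rfl⟩ := Submodule.Quotient.mk_surjective (range c) q
    obtain ⟨x, rfl⟩ := hπ w
    exact ⟨Submodule.Quotient.mk x, by rw [hd5def, Submodule.mapQ_apply]⟩
  -- cardinality bookkeeping
  have hbot : Nat.card (⊥ : Submodule R (ker a)) = 1 := by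
    haveI : Unique (⊥ : Submodule R (ker a)) := Submodule.uniqueBot
    exact Nat.card_unique
  have c1 : Nat.card (ker a) = Nat.card (range d1) := by
    rw [card_eq_ker_mul_range' d1, ker_eq_bot.mpr hd1inj, hbot, one_mul]
  have c2 : Nat.card (ker b) = Nat.card (range d1) * Nat.card (range d2) := by
    rw [card_eq_ker_mul_range' d2, E1]
  have c3 : Nat.card (ker c) = Nat.card (range d2) * Nat.card (range δ) := by
    rw [card_eq_ker_mul_range' δ, E2]
  have c4 : Nat.card (A ⧸ range a) = Nat.card (range δ) * Nat.card (range d4) := by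
    rw [card_eq_ker_mul_range' d4, E3]
  have c5 : Nat.card (B ⧸ range b) = Nat.card (range d4) * Nat.card (range d5) := by
    rw [card_eq_ker_mul_range' d5, E4]
  have c6 : Nat.card (C ⧸ range c) = Nat.card (range d5) := by
    rw [range_eq_top.mpr E5]
    exact (Nat.card_congr Submodule.topEquiv.toEquiv).symm
  rw [c1, c2, c3, c4, c5, c6]
  ring

private lemma herbrand_finite {X : Type*} [AddCommGroup X] [Module R X] [Finite X] (f : R) :
    Nat.card (ker (lsmul R X f)) = Nat.card (X ⧸ range (lsmul R X f)) := by
  have h1 := card_eq_ker_mul_range' (lsmul R X f)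
  have h2 := Submodule.card_eq_card_quotient_mul_card (range (lsmul R X f))
  have hpos : 0 < Nat.card (range (lsmul R X f)) := Nat.card_pos
  rw [h2] at h1
  rw [mul_comm (Nat.card (range (lsmul R X f)))] at h1
  exact Nat.eq_of_mul_eq_mul_right hpos h1.symm

private lemma herbrand_congr_ker {X Y : Type*} [AddCommGroup X] [Module R X]
    [AddCommGroup Y] [Module R Y] (e : X ≃ₗ[R] Y) (f : R) :
    Nat.card (ker (lsmul R X f)) = Nat.card (ker (lsmul R Y f)) := by
  refine Nat.card_congr ⟨fun x => ⟨e x, ?_⟩, fun y => ⟨e.symm y, ?_⟩, ?_, ?_⟩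
  · have hx : f • (x : X) = 0 := mem_ker.mp x.2
    rw [mem_ker, lsmul_apply, ← map_smul, hx, map_zero]
  · have hy : f • (y : Y) = 0 := mem_ker.mp y.2
    rw [mem_ker, lsmul_apply, ← map_smul, hy, map_zero]
  · intro x; apply Subtype.ext; simp
  · intro y; apply Subtype.ext; simp

private lemma herbrand_map_range {X Y : Type*} [AddCommGroup X] [Module R X]
    [AddCommGroup Y] [Module R Y] (e : X ≃ₗ[R] Y) (f : R) :
    (range (lsmul R X f)).map (e : X →ₗ[R] Y) = range (lsmul R Y f) := by
  ext y
  simp only [Submodule.mem_map, mem_range, lsmul_apply]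
  constructor
  · rintro ⟨x, ⟨z, rfl⟩, rfl⟩
    exact ⟨e z, (map_smul e f z).symm⟩
  · rintro ⟨z, rfl⟩
    exact ⟨f • e.symm z, ⟨e.symm z, rfl⟩, by simp⟩

private lemma herbrand_congr_coker {X Y : Type*} [AddCommGroup X] [Module R X]
    [AddCommGroup Y] [Module R Y] (e : X ≃ₗ[R] Y) (f : R) :
    Nat.card (X ⧸ range (lsmul R X f)) = Nat.card (Y ⧸ range (lsmul R Y f)) :=
  Nat.card_congr (Submodule.Quotient.equiv _ _ e (herbrand_map_range e f)).toEquiv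

private lemma torsionBy_eq_ker {X : Type*} [AddCommGroup X] [Module R X] (f : R) :
    Submodule.torsionBy R X f = ker (lsmul R X f) := by
  ext x
  rw [Submodule.mem_torsionBy_iff, mem_ker, lsmul_apply]

private lemma span_smul_top_eq {X : Type*} [AddCommGroup X] [Module R X] (f : R) :
    (Ideal.span {f} : Ideal R) • (⊤ : Submodule R X) = range (lsmul R X f) := by
  rw [Submodule.ideal_span_singleton_smul]
  ext x
  constructor
  · intro hx
    obtain ⟨y, -, rfl⟩ := Set.mem_smul_set.mp hx
    exact ⟨y, rfl⟩
  · rintro ⟨y, rfl⟩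
    exact Submodule.smul_mem_pointwise_smul y f ⊤ trivial

end Herbrand

/-- The Herbrand-type quotient `|M/fM| / |M[f]|` for finitely generated torsion
`Λ = ℤ_p[[t]]`-modules is invariant under pseudo-isomorphism: if `φ : M → M'` is a
`Λ`-linear map with finite kernel and cokernel, and `M/fM`, `M[f]`, `M'/fM'`, `M'[f]`
are all finite, then `|M/fM| · |M'[f]| = |M'/fM'| · |M[f]|`. -/
theorem stmt19 (p : ℕ) [Fact p.Prime]
    (M M' : Type*) [AddCommGroup M] [AddCommGroup M']
    [Module (PowerSeries ℤ_[p]) M] [Module (PowerSeries ℤ_[p]) M']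
    [Module.Finite (PowerSeries ℤ_[p]) M] [Module.Finite (PowerSeries ℤ_[p]) M']
    (htor : Module.IsTorsion (PowerSeries ℤ_[p]) M)
    (htor' : Module.IsTorsion (PowerSeries ℤ_[p]) M')
    (f : PowerSeries ℤ_[p])
    (φ : M →ₗ[PowerSeries ℤ_[p]] M')
    (hker : Finite (LinearMap.ker φ)) (hcoker : Finite (M' ⧸ LinearMap.range φ))
    (h₁ : Finite (M ⧸ (Ideal.span {f} • (⊤ : Submodule (PowerSeries ℤ_[p]) M))))
    (h₂ : Finite (Submodule.torsionBy (PowerSeries ℤ_[p]) M f))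
    (h₁' : Finite (M' ⧸ (Ideal.span {f} • (⊤ : Submodule (PowerSeries ℤ_[p]) M'))))
    (h₂' : Finite (Submodule.torsionBy (PowerSeries ℤ_[p]) M' f)) :
    Nat.card (M ⧸ (Ideal.span {f} • (⊤ : Submodule (PowerSeries ℤ_[p]) M)))
        * Nat.card (Submodule.torsionBy (PowerSeries ℤ_[p]) M' f)
      = Nat.card (M' ⧸ (Ideal.span {f} • (⊤ : Submodule (PowerSeries ℤ_[p]) M')))
        * Nat.card (Submodule.torsionBy (PowerSeries ℤ_[p]) M f) := by
  classical
  let R := PowerSeries ℤ_[p]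
  rw [span_smul_top_eq f, span_smul_top_eq f, torsionBy_eq_ker f, torsionBy_eq_ker f]
  rw [span_smul_top_eq f] at h₁ h₁'
  rw [torsionBy_eq_ker f] at h₂ h₂'
  -- N := range φ
  -- Step 1 : SES 0 → ker φ → M → M ⧸ ker φ → 0, with (M ⧸ ker φ) ≃ range φ
  have step1 :
      Nat.card (ker (lsmul R (↥(LinearMap.range φ)) f)) * Nat.card (M ⧸ range (lsmul R M f))
        = Nat.card (ker (lsmul R M f))
          * Nat.card ((↥(LinearMap.range φ)) ⧸ range (lsmul R (↥(LinearMap.range φ)) f)) := by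
    have h := herbrand_ses (LinearMap.ker φ).subtype (LinearMap.ker φ).mkQ
      (Submodule.injective_subtype _) (Submodule.mkQ_surjective _)
      (by rw [Submodule.range_subtype, Submodule.ker_mkQ]) f
    have e1 : (M ⧸ LinearMap.ker φ) ≃ₗ[R] ↥(LinearMap.range φ) := φ.quotKerEquivRange
    rw [herbrand_congr_ker e1 f, herbrand_congr_coker e1 f,
      herbrand_finite (X := ↥(LinearMap.ker φ)) f] at h
    haveI : Finite ((↥(LinearMap.ker φ)) ⧸ range (lsmul R (↥(LinearMap.ker φ)) f)) :=
      Finite.of_surjective _ (Submodule.mkQ_surjective _)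
    have hpos : 0 < Nat.card ((↥(LinearMap.ker φ)) ⧸
        range (lsmul R (↥(LinearMap.ker φ)) f)) := Nat.card_pos
    apply Nat.eq_of_mul_eq_mul_left hpos
    calc Nat.card ((↥(LinearMap.ker φ)) ⧸ range (lsmul R (↥(LinearMap.ker φ)) f))
          * (Nat.card (ker (lsmul R (↥(LinearMap.range φ)) f))
            * Nat.card (M ⧸ range (lsmul R M f)))
        = Nat.card ((↥(LinearMap.ker φ)) ⧸ range (lsmul R (↥(LinearMap.ker φ)) f))
          * Nat.card (ker (lsmul R (↥(LinearMap.range φ)) f))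
          * Nat.card (M ⧸ range (lsmul R M f)) := by ring
      _ = Nat.card (ker (lsmul R M f))
          * Nat.card ((↥(LinearMap.ker φ)) ⧸ range (lsmul R (↥(LinearMap.ker φ)) f))
          * Nat.card ((↥(LinearMap.range φ)) ⧸ range (lsmul R (↥(LinearMap.range φ)) f)) := h
      _ = Nat.card ((↥(LinearMap.ker φ)) ⧸ range (lsmul R (↥(LinearMap.ker φ)) f))
          * (Nat.card (ker (lsmul R M f))
            * Nat.card ((↥(LinearMap.range φ)) ⧸ range (lsmul R (↥(LinearMap.range φ)) f))) := by
          ring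
  -- Step 2 : SES 0 → range φ → M' → M' ⧸ range φ → 0
  have step2 :
      Nat.card (ker (lsmul R (↥(LinearMap.range φ)) f)) * Nat.card (M' ⧸ range (lsmul R M' f))
        = Nat.card (ker (lsmul R M' f))
          * Nat.card ((↥(LinearMap.range φ)) ⧸ range (lsmul R (↥(LinearMap.range φ)) f)) := by
    have h := herbrand_ses (LinearMap.range φ).subtype (LinearMap.range φ).mkQ
      (Submodule.injective_subtype _) (Submodule.mkQ_surjective _)
      (by rw [Submodule.range_subtype, Submodule.ker_mkQ]) f
    rw [herbrand_finite (X := M' ⧸ LinearMap.range φ) f] at h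
    haveI : Finite ((M' ⧸ LinearMap.range φ) ⧸
        range (lsmul R (M' ⧸ LinearMap.range φ) f)) :=
      Finite.of_surjective _ (Submodule.mkQ_surjective _)
    have hpos : 0 < Nat.card ((M' ⧸ LinearMap.range φ) ⧸
        range (lsmul R (M' ⧸ LinearMap.range φ) f)) := Nat.card_pos
    apply Nat.eq_of_mul_eq_mul_right hpos
    calc Nat.card (ker (lsmul R (↥(LinearMap.range φ)) f))
          * Nat.card (M' ⧸ range (lsmul R M' f))
          * Nat.card ((M' ⧸ LinearMap.range φ) ⧸ range (lsmul R (M' ⧸ LinearMap.range φ) f))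
        = Nat.card (ker (lsmul R (↥(LinearMap.range φ)) f))
          * Nat.card ((M' ⧸ LinearMap.range φ) ⧸ range (lsmul R (M' ⧸ LinearMap.range φ) f))
          * Nat.card (M' ⧸ range (lsmul R M' f)) := by ring
      _ = Nat.card (ker (lsmul R M' f))
          * Nat.card ((↥(LinearMap.range φ)) ⧸ range (lsmul R (↥(LinearMap.range φ)) f))
          * Nat.card ((M' ⧸ LinearMap.range φ) ⧸ range (lsmul R (M' ⧸ LinearMap.range φ) f)) := h
  -- finiteness/positivity of the invariants of N = range φ
  have hkNfin : Finite (ker (lsmul R (↥(LinearMap.range φ)) f)) := by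
    apply Finite.of_injective (β := ker (lsmul R M' f))
      (fun x : ker (lsmul R (↥(LinearMap.range φ)) f) =>
      (⟨((x : ↥(LinearMap.range φ)) : M'), by
        rw [mem_ker, lsmul_apply]
        have hx : f • (x : ↥(LinearMap.range φ)) = 0 := by
          have h10 := mem_ker.mp x.2
          rwa [lsmul_apply] at h10
        calc f • ((x : ↥(LinearMap.range φ)) : M')
            = ((f • (x : ↥(LinearMap.range φ)) : ↥(LinearMap.range φ)) : M') := rfl
          _ = 0 := by rw [hx]; rfl⟩ : ker (lsmul R M' f)))
    intro x y hxy
    have h11 := congrArg Subtype.val hxy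
    exact Subtype.ext (Subtype.ext h11)
  have hcNfin : Finite ((↥(LinearMap.range φ)) ⧸ range (lsmul R (↥(LinearMap.range φ)) f)) := by
    have hle : range (lsmul R M f)
        ≤ comap φ.rangeRestrict (range (lsmul R (↥(LinearMap.range φ)) f)) := by
      rintro x ⟨y, rfl⟩
      refine ⟨φ.rangeRestrict y, ?_⟩
      rw [lsmul_apply, lsmul_apply, ← map_smul]
    have hsurj : Function.Surjective
        ((range (lsmul R M f)).mapQ (range (lsmul R (↥(LinearMap.range φ)) f))
          φ.rangeRestrict hle) := by
      intro q
      obtain ⟨y, rfl⟩ := Submodule.Quotient.mk_surjective _ q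
      obtain ⟨x, rfl⟩ := φ.surjective_rangeRestrict y
      exact ⟨Submodule.Quotient.mk x, by rw [Submodule.mapQ_apply]⟩
    exact Finite.of_surjective _ hsurj
  have hkNpos : 0 < Nat.card (ker (lsmul R (↥(LinearMap.range φ)) f)) := Nat.card_pos
  have hcNpos : 0 < Nat.card ((↥(LinearMap.range φ)) ⧸
      range (lsmul R (↥(LinearMap.range φ)) f)) := Nat.card_pos
  -- combine
  apply Nat.eq_of_mul_eq_mul_right (Nat.mul_pos hkNpos hcNpos)
  calc Nat.card (M ⧸ range (lsmul R M f)) * Nat.card (ker (lsmul R M' f))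
        * (Nat.card (ker (lsmul R (↥(LinearMap.range φ)) f))
          * Nat.card ((↥(LinearMap.range φ)) ⧸ range (lsmul R (↥(LinearMap.range φ)) f)))
      = (Nat.card (ker (lsmul R (↥(LinearMap.range φ)) f))
          * Nat.card (M ⧸ range (lsmul R M f)))
        * (Nat.card (ker (lsmul R M' f))
          * Nat.card ((↥(LinearMap.range φ)) ⧸ range (lsmul R (↥(LinearMap.range φ)) f))) := by
        ring
    _ = (Nat.card (ker (lsmul R M f))
          * Nat.card ((↥(LinearMap.range φ)) ⧸ range (lsmul R (↥(LinearMap.range φ)) f)))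
        * (Nat.card (ker (lsmul R (↥(LinearMap.range φ)) f))
          * Nat.card (M' ⧸ range (lsmul R M' f))) := by rw [step1, step2]
    _ = Nat.card (M' ⧸ range (lsmul R M' f)) * Nat.card (ker (lsmul R M f))
        * (Nat.card (ker (lsmul R (↥(LinearMap.range φ)) f))
          * Nat.card ((↥(LinearMap.range φ)) ⧸ range (lsmul R (↥(LinearMap.range φ)) f))) := by
        ring
end
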